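/- For ξ, η ∈ ℝ² with ξ, ξ-η ≠ 0, ∂_ξ(⟨ξ⟩ + ⟨ξ-η⟩) = ξ/⟨ξ⟩ + (ξ-η)/⟨ξ-η⟩, and there exists a 2×2 matrix-valued function Q̃₁(ξ,η) with c/⟨|ξ|+|η|⟩³ ≤ ‖Q̃₁(ξ,η)‖ ≤ C such that ξ/⟨ξ⟩ + (ξ-η)/⟨ξ-η⟩ = Q̃₁(ξ,η)(2ξ - η). -/

import Mathlib

open scoped RealInnerProductSpace

noncomputable def jap2 (x : EuclideanSpace ℝ (Fin 2)) : ℝ := Real.sqrt (1 + ‖x‖ ^ 2)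

noncomputable def japR (r : ℝ) : ℝ := Real.sqrt (1 + r ^ 2)

section Stmt13Aux

local notation "E2" => EuclideanSpace ℝ (Fin 2)

lemma abge' (p q a b : ℝ) (ha : a^2 = 1+p^2) (hb : b^2 = 1+q^2) (ha1 : 1 ≤ a) (hb1 : 1 ≤ b) :
    1 + p*q ≤ a*b := by
  nlinarith [sq_nonneg (p-q), sq_nonneg (a*b - (1+p*q)),
    mul_pos (lt_of_lt_of_le zero_lt_one ha1) (lt_of_lt_of_le zero_lt_one hb1)]

lemma lemA' (p q t a b : ℝ) (ht : |t| ≤ p*q)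
    (ha : a^2 = 1+p^2) (hb : b^2 = 1+q^2) (ha1 : 1 ≤ a) (hb1 : 1 ≤ b) :
    p^2+q^2-2*t ≤ (a+b) * (b*p^2 + a*q^2 - (a+b)*t) := by
  have h1 := abge' p q a b ha hb ha1 hb1
  have h2 : t ≤ p*q := (abs_le.mp ht).2
  nlinarith [mul_nonneg (mul_nonneg (sub_nonneg.mpr h2) (sq_nonneg (p-q)))
      (le_of_lt (lt_of_lt_of_le zero_lt_one ha1)),
    mul_nonneg (sub_nonneg.mpr h2) (sq_nonneg (p-q)),
    mul_nonneg (by nlinarith : (0:ℝ) ≤ a*b - p*q) (sq_nonneg (p-q)),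
    mul_nonneg (sub_nonneg.mpr h2) (by nlinarith : (0:ℝ) ≤ p^2+q^2+2*a*b)]

lemma factnn' (p q a b : ℝ) (hp : 0 ≤ p) (hq : 0 ≤ q)
    (ha : a^2 = 1+p^2) (hb : b^2 = 1+q^2) (ha1 : 1 ≤ a) (hb1 : 1 ≤ b) :
    0 ≤ (p*b-q*a)*(p^3*b*(b+1)-q^3*a*(a+1)) := by
  have ha0 : (0:ℝ) < a := lt_of_lt_of_le zero_lt_one ha1
  have hb0 : (0:ℝ) < b := lt_of_lt_of_le zero_lt_one hb1
  rcases le_total q p with h | h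
  · have hba : b ≤ a := by nlinarith
    have h1 : q*a ≤ p*b := by nlinarith [mul_nonneg hq ha0.le, mul_nonneg hp hb0.le]
    have h2 : (q*a)*(b-1) ≤ (p*b)*(a-1) :=
      mul_le_mul h1 (by linarith) (by linarith) (by nlinarith [mul_nonneg hp hb0.le])
    have e : p^3*b*(b+1)-q^3*a*(a+1) = (a+1)*(b+1)*((p*b)*(a-1) - (q*a)*(b-1)) := by
      linear_combination (-(p*b*(b+1)))*ha + (q*a*(a+1))*hb
    have h3 : 0 ≤ p^3*b*(b+1)-q^3*a*(a+1) := by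
      rw [e]; exact mul_nonneg (by positivity) (by linarith)
    exact mul_nonneg (by linarith) h3
  · have hba : a ≤ b := by nlinarith
    have h1 : p*b ≤ q*a := by nlinarith [mul_nonneg hq ha0.le, mul_nonneg hp hb0.le]
    have h2 : (p*b)*(a-1) ≤ (q*a)*(b-1) :=
      mul_le_mul h1 (by linarith) (by linarith) (by nlinarith [mul_nonneg hq ha0.le])
    have e : p^3*b*(b+1)-q^3*a*(a+1) = (a+1)*(b+1)*((p*b)*(a-1) - (q*a)*(b-1)) := by
      linear_combination (-(p*b*(b+1)))*ha + (q*a*(a+1))*hb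
    have h3 : p^3*b*(b+1)-q^3*a*(a+1) ≤ 0 := by
      rw [e]
      exact mul_nonpos_of_nonneg_of_nonpos (by positivity) (by linarith)
    nlinarith [mul_nonneg (neg_nonneg.2 (by linarith : p*b - q*a ≤ 0)) (neg_nonneg.2 h3)]

lemma lemB' (p q t a b : ℝ) (hp : 0 ≤ p) (hq : 0 ≤ q) (ht : |t| ≤ p*q)
    (ha : a^2 = 1+p^2) (hb : b^2 = 1+q^2) (ha1 : 1 ≤ a) (hb1 : 1 ≤ b) :
    b^2*p^2 + a^2*q^2 - 2*a*b*t ≤ a*b^2*p^2 + a^2*b*q^2 - a*b*(a+b)*t := by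
  have ha0 : (0:ℝ) < a := lt_of_lt_of_le zero_lt_one ha1
  have hb0 : (0:ℝ) < b := lt_of_lt_of_le zero_lt_one hb1
  have hpos : (0:ℝ) < (a+1)*(b+1) := by positivity
  rw [← sub_nonneg]
  have key := factnn' p q a b hp hq ha hb ha1 hb1
  have h3 : 0 ≤ (p*q-t)*(a*b*(p^2*(b+1)+q^2*(a+1))) := by
    apply mul_nonneg (by linarith [(abs_le.mp ht).2]); positivity
  have hid : (a*b^2*p^2 + a^2*b*q^2 - a*b*(a+b)*t - (b^2*p^2 + a^2*q^2 - 2*a*b*t))*((a+1)*(b+1))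
      = (p*b-q*a)*(p^3*b*(b+1)-q^3*a*(a+1)) + (p*q-t)*(a*b*(p^2*(b+1)+q^2*(a+1))) := by
    linear_combination (-q^2 - q^4 + b*t + b*q^2*t + b^2*q^2 + b^2*p^2 - b^3*t + b^3*p^2 - a*q^2
      - a*q^4 - a*b*t - a*b^2*t + a*b^2*q^2) * ha
      + (q^2 + p^2*q^2 - b*t - b*p^2*t + a*q^2 + a*p^2*q^2 - a*b*t) * hb
  have h4 : 0 ≤ (a*b^2*p^2 + a^2*b*q^2 - a*b*(a+b)*t
      - (b^2*p^2 + a^2*q^2 - 2*a*b*t))*((a+1)*(b+1)) := by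
    rw [hid]; linarith
  exact le_of_mul_le_mul_right (by rw [zero_mul]; exact h4) hpos

lemma jap2_sq (x : E2) : (jap2 x)^2 = 1 + ‖x‖^2 := Real.sq_sqrt (by positivity)

lemma jap2_one_le (x : E2) : 1 ≤ jap2 x := by
  rw [show (1:ℝ) = Real.sqrt 1 from Real.sqrt_one.symm]
  exact Real.sqrt_le_sqrt (by nlinarith [sq_nonneg ‖x‖])

lemma jap2_pos (x : E2) : 0 < jap2 x := lt_of_lt_of_le zero_lt_one (jap2_one_le x)

lemma jap2_neg (x : E2) : jap2 (-x) = jap2 x := by simp [jap2]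

lemma japR_one_le (r : ℝ) : 1 ≤ japR r := by
  rw [show (1:ℝ) = Real.sqrt 1 from Real.sqrt_one.symm]
  exact Real.sqrt_le_sqrt (by nlinarith [sq_nonneg r])

lemma japR_pos (r : ℝ) : 0 < japR r := lt_of_lt_of_le zero_lt_one (japR_one_le r)

lemma jap2_le_japR {x : E2} {r : ℝ} (h : ‖x‖ ≤ r) : jap2 x ≤ japR r :=
  Real.sqrt_le_sqrt (by nlinarith [norm_nonneg x])

lemma hasGradientAt_jap2_sub (η x : E2) :
    HasGradientAt (fun z : E2 => jap2 (z - η)) ((jap2 (x - η))⁻¹ • (x - η)) x := by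
  rw [hasGradientAt_iff_hasFDerivAt]
  have hpos : (0:ℝ) < 1 + ‖x - η‖ ^ 2 := by positivity
  have h1 : HasFDerivAt (fun z : E2 => (1:ℝ) + ‖z - η‖ ^ 2)
      (2 • ((innerSL ℝ (x - η)).comp (ContinuousLinearMap.id ℝ E2))) x := by
    simpa using (((hasFDerivAt_id x).sub_const η).norm_sq.const_add 1)
  have h3 := h1.sqrt hpos.ne'
  refine h3.congr_fderiv ?_
  ext v
  simp only [InnerProductSpace.toDual_apply_apply, jap2, ContinuousLinearMap.coe_smul',
    Pi.smul_apply, ContinuousLinearMap.smul_apply, ContinuousLinearMap.coe_comp',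
    Function.comp_apply, ContinuousLinearMap.coe_id', id_eq, innerSL_apply_apply,
    real_inner_smul_left, smul_eq_mul]
  have hs : Real.sqrt (1 + ‖x - η‖ ^ 2) ≠ 0 := by positivity
  field_simp
  ring

lemma hasGradientAt_sum (η ξ : E2) :
    HasGradientAt (fun z : E2 => jap2 z + jap2 (z - η))
      ((jap2 ξ)⁻¹ • ξ + (jap2 (ξ - η))⁻¹ • (ξ - η)) ξ := by
  rw [hasGradientAt_iff_hasFDerivAt, map_add]
  have h1 : HasGradientAt (fun z : E2 => jap2 z) ((jap2 ξ)⁻¹ • ξ) ξ := by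
    simpa using hasGradientAt_jap2_sub 0 ξ
  exact h1.hasFDerivAt.add (hasGradientAt_jap2_sub η ξ).hasFDerivAt

lemma div_helper1 (U G M : ℝ) (hU : 0 ≤ U) (hG : 0 ≤ G) (hM : 0 < M)
    (h7 : U^2 ≤ 2*M^3*(G*U)) : U ≤ 2*M^3*G := by
  rcases eq_or_lt_of_le hU with h | h
  · rw [← h]; positivity
  · have h8 : U*U ≤ (2*M^3*G)*U := by nlinarith
    exact le_of_mul_le_mul_right h8 h

lemma div_helper2 (U G I : ℝ) (hU : 0 ≤ U) (hG : 0 ≤ G) (h1 : G^2 ≤ I) (h2 : I ≤ G*U) : G ≤ U := by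
  rcases eq_or_lt_of_le hG with h | h
  · rw [← h]; exact hU
  · have h8 : G*G ≤ U*G := by nlinarith
    exact le_of_mul_le_mul_right h8 h

/-- Core two-sided comparison between `‖x + w‖` and the norm of
`x/⟨x⟩ + w/⟨w⟩`. -/
lemma core_bounds (x w : E2) {M : ℝ} (hM1 : 1 ≤ M) (haM : jap2 x ≤ M) (hbM : jap2 w ≤ M) :
    ‖x + w‖ ≤ 2*M^3*‖(jap2 x)⁻¹ • x + (jap2 w)⁻¹ • w‖ ∧
    ‖(jap2 x)⁻¹ • x + (jap2 w)⁻¹ • w‖ ≤ ‖x + w‖ := by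
  have hM0 : (0:ℝ) < M := lt_of_lt_of_le zero_lt_one hM1
  have ha1 : 1 ≤ jap2 x := jap2_one_le x
  have hb1 : 1 ≤ jap2 w := jap2_one_le w
  have ha0 : 0 < jap2 x := jap2_pos x
  have hb0 : 0 < jap2 w := jap2_pos w
  have ha2 : (jap2 x)^2 = 1 + ‖x‖^2 := jap2_sq x
  have hb2 : (jap2 w)^2 = 1 + ‖w‖^2 := jap2_sq w
  have ht : |(-(⟪x, w⟫ : ℝ))| ≤ ‖x‖ * ‖w‖ := by
    rw [abs_neg]; exact abs_real_inner_le_norm x w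
  have einner : ⟪(jap2 x)⁻¹ • x + (jap2 w)⁻¹ • w, x + w⟫
      = (jap2 x)⁻¹*‖x‖^2 + (jap2 w)⁻¹*‖w‖^2 + ((jap2 x)⁻¹+(jap2 w)⁻¹)*⟪x, w⟫ := by
    simp only [inner_add_left, inner_add_right, real_inner_smul_left,
      real_inner_self_eq_norm_sq, real_inner_comm w x]
    ring
  have eu : ‖x + w‖^2 = ‖x‖^2 + ‖w‖^2 + 2*⟪x, w⟫ := by
    rw [← real_inner_self_eq_norm_sq]
    simp only [inner_add_left, inner_add_right, real_inner_self_eq_norm_sq,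
      real_inner_comm w x]
    ring
  have eg : ‖(jap2 x)⁻¹ • x + (jap2 w)⁻¹ • w‖^2
      = (jap2 x)⁻¹^2*‖x‖^2 + (jap2 w)⁻¹^2*‖w‖^2 + 2*((jap2 x)⁻¹*(jap2 w)⁻¹)*⟪x, w⟫ := by
    rw [← real_inner_self_eq_norm_sq]
    simp only [inner_add_left, inner_add_right, real_inner_smul_left,
      real_inner_smul_right, real_inner_self_eq_norm_sq, real_inner_comm w x,
      norm_smul, Real.norm_eq_abs, mul_pow, sq_abs]
    ring
  have hA := lemA' ‖x‖ ‖w‖ (-(⟪x, w⟫ : ℝ)) (jap2 x) (jap2 w) ht ha2 hb2 ha1 hb1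
  have key1 : ‖x + w‖^2 ≤ (jap2 x + jap2 w)*(jap2 x * jap2 w)
      * ⟪(jap2 x)⁻¹ • x + (jap2 w)⁻¹ • w, x + w⟫ := by
    rw [eu, einner]
    have e : (jap2 x + jap2 w)*(jap2 x * jap2 w)
        * ((jap2 x)⁻¹*‖x‖^2 + (jap2 w)⁻¹*‖w‖^2 + ((jap2 x)⁻¹+(jap2 w)⁻¹)*⟪x, w⟫)
        = (jap2 x + jap2 w) * (jap2 w * ‖x‖^2 + jap2 x * ‖w‖^2
            - (jap2 x + jap2 w)*(-(⟪x, w⟫ : ℝ))) := by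
      field_simp; ring
    rw [e]; linarith
  have hB := lemB' ‖x‖ ‖w‖ (-(⟪x, w⟫ : ℝ)) (jap2 x) (jap2 w) (norm_nonneg x) (norm_nonneg w)
    ht ha2 hb2 ha1 hb1
  have key2 : ‖(jap2 x)⁻¹ • x + (jap2 w)⁻¹ • w‖^2
      ≤ ⟪(jap2 x)⁻¹ • x + (jap2 w)⁻¹ • w, x + w⟫ := by
    have e1 : (jap2 x)^2*(jap2 w)^2*‖(jap2 x)⁻¹ • x + (jap2 w)⁻¹ • w‖^2
        = (jap2 w)^2*‖x‖^2 + (jap2 x)^2*‖w‖^2 - 2*(jap2 x)*(jap2 w)*(-(⟪x, w⟫ : ℝ)) := by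
      rw [eg]; field_simp; ring
    have e2 : (jap2 x)^2*(jap2 w)^2*⟪(jap2 x)⁻¹ • x + (jap2 w)⁻¹ • w, x + w⟫
        = (jap2 x)*(jap2 w)^2*‖x‖^2 + (jap2 x)^2*(jap2 w)*‖w‖^2
          - (jap2 x)*(jap2 w)*((jap2 x)+(jap2 w))*(-(⟪x, w⟫ : ℝ)) := by
      rw [einner]; field_simp; ring
    have h5 : (jap2 x)^2*(jap2 w)^2*‖(jap2 x)⁻¹ • x + (jap2 w)⁻¹ • w‖^2
        ≤ (jap2 x)^2*(jap2 w)^2*⟪(jap2 x)⁻¹ • x + (jap2 w)⁻¹ • w, x + w⟫ := by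
      rw [e1, e2]; linarith
    exact le_of_mul_le_mul_left h5 (by positivity)
  have hinner_le := real_inner_le_norm ((jap2 x)⁻¹ • x + (jap2 w)⁻¹ • w) (x + w)
  constructor
  · have hab : jap2 x * jap2 w ≤ M^2 := by nlinarith
    have hsum : jap2 x + jap2 w ≤ 2*M := by linarith
    have habM : (jap2 x + jap2 w)*(jap2 x * jap2 w) ≤ 2*M^3 := by
      calc (jap2 x + jap2 w)*(jap2 x * jap2 w) ≤ (2*M)*(M^2) :=
            mul_le_mul hsum hab (by positivity) (by positivity)
        _ = 2*M^3 := by ring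
    have h7 : ‖x + w‖^2 ≤ 2*M^3*(‖(jap2 x)⁻¹ • x + (jap2 w)⁻¹ • w‖*‖x + w‖) := by
      calc ‖x + w‖^2 ≤ (jap2 x + jap2 w)*(jap2 x * jap2 w)
            * ⟪(jap2 x)⁻¹ • x + (jap2 w)⁻¹ • w, x + w⟫ := key1
        _ ≤ (jap2 x + jap2 w)*(jap2 x * jap2 w)
            * (‖(jap2 x)⁻¹ • x + (jap2 w)⁻¹ • w‖*‖x + w‖) :=
            mul_le_mul_of_nonneg_left hinner_le (by positivity)
        _ ≤ 2*M^3*(‖(jap2 x)⁻¹ • x + (jap2 w)⁻¹ • w‖*‖x + w‖) :=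
            mul_le_mul_of_nonneg_right habM (by positivity)
    exact div_helper1 _ _ _ (norm_nonneg _) (norm_nonneg _) hM0 h7
  · exact div_helper2 _ _ _ (norm_nonneg _) (norm_nonneg _) key2 hinner_le

open Classical in
noncomputable def Qmat (ξ η : E2) : E2 →L[ℝ] E2 :=
  if ((2:ℝ) • ξ - η) = 0 then (japR (‖ξ‖ + ‖η‖) ^ 3)⁻¹ • ContinuousLinearMap.id ℝ E2
  else (innerSL ℝ ((‖(2:ℝ) • ξ - η‖ ^ 2)⁻¹ • ((2:ℝ) • ξ - η))).smulRight
    ((jap2 ξ)⁻¹ • ξ + (jap2 (ξ - η))⁻¹ • (ξ - η))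

end Stmt13Aux

/-- `∂_ξ(⟨ξ⟩ + ⟨ξ-η⟩) = ξ/⟨ξ⟩ + (ξ-η)/⟨ξ-η⟩`, and this gradient can be written as
`Q̃₁(ξ,η)(2ξ - η)` with `c/⟨|ξ|+|η|⟩³ ≤ ‖Q̃₁(ξ,η)‖ ≤ C`. -/
theorem stmt13 : ∃ c C : ℝ, 0 < c ∧ 0 < C ∧
    ∃ Q : EuclideanSpace ℝ (Fin 2) → EuclideanSpace ℝ (Fin 2) →
        (EuclideanSpace ℝ (Fin 2) →L[ℝ] EuclideanSpace ℝ (Fin 2)),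
    ∀ ξ η : EuclideanSpace ℝ (Fin 2), ξ ≠ 0 → ξ - η ≠ 0 →
      HasGradientAt (fun z : EuclideanSpace ℝ (Fin 2) => jap2 z + jap2 (z - η))
        ((jap2 ξ)⁻¹ • ξ + (jap2 (ξ - η))⁻¹ • (ξ - η)) ξ ∧
      (jap2 ξ)⁻¹ • ξ + (jap2 (ξ - η))⁻¹ • (ξ - η) = Q ξ η ((2 : ℝ) • ξ - η) ∧
      c / japR (‖ξ‖ + ‖η‖) ^ 3 ≤ ‖Q ξ η‖ ∧ ‖Q ξ η‖ ≤ C := by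
  refine ⟨1/2, 1, by norm_num, by norm_num, Qmat, fun ξ η hξ hξη => ?_⟩
  refine ⟨hasGradientAt_sum η ξ, ?_⟩
  have hM1 : 1 ≤ japR (‖ξ‖ + ‖η‖) := japR_one_le _
  have hM0 : 0 < japR (‖ξ‖ + ‖η‖) := japR_pos _
  have haM : jap2 ξ ≤ japR (‖ξ‖ + ‖η‖) := jap2_le_japR (by linarith [norm_nonneg η])
  have hbM : jap2 (ξ - η) ≤ japR (‖ξ‖ + ‖η‖) := jap2_le_japR (norm_sub_le ξ η)
  have huw : (2:ℝ) • ξ - η = ξ + (ξ - η) := by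
    rw [two_smul]; abel
  by_cases hu0 : (2:ℝ) • ξ - η = 0
  · -- degenerate case : 2ξ = η, gradient vanishes
    have hη : η = (2:ℝ) • ξ := (sub_eq_zero.mp hu0).symm
    have hwξ : ξ - η = -ξ := by rw [hη, two_smul]; abel
    have hg0 : (jap2 ξ)⁻¹ • ξ + (jap2 (ξ - η))⁻¹ • (ξ - η) = 0 := by
      rw [hwξ, jap2_neg, smul_neg, add_neg_cancel]
    have hQ : Qmat ξ η
        = (japR (‖ξ‖ + ‖η‖) ^ 3)⁻¹ • ContinuousLinearMap.id ℝ (EuclideanSpace ℝ (Fin 2)) := by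
      rw [Qmat, if_pos hu0]
    have hQn : ‖Qmat ξ η‖ = (japR (‖ξ‖ + ‖η‖) ^ 3)⁻¹ := by
      rw [hQ, norm_smul ((japR (‖ξ‖ + ‖η‖) ^ 3)⁻¹)
          (ContinuousLinearMap.id ℝ (EuclideanSpace ℝ (Fin 2))),
        ContinuousLinearMap.norm_id, mul_one, norm_inv,
        Real.norm_eq_abs, abs_of_pos (by positivity)]
    refine ⟨?_, ?_, ?_⟩
    · rw [hu0, map_zero, hg0]
    · rw [hQn, div_le_iff₀ (by positivity), inv_mul_cancel₀ (by positivity)]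
      norm_num
    · rw [hQn]
      have h1 : (1:ℝ) ≤ japR (‖ξ‖ + ‖η‖) ^ 3 := one_le_pow₀ hM1
      calc (japR (‖ξ‖ + ‖η‖) ^ 3)⁻¹ ≤ 1⁻¹ := by
            exact inv_anti₀ (by norm_num) h1
        _ = 1 := by norm_num
  · -- generic case
    obtain ⟨h1, h2⟩ := core_bounds ξ (ξ - η) hM1 haM hbM
    rw [← huw] at h1 h2
    have hu_pos : 0 < ‖(2:ℝ) • ξ - η‖ := norm_pos_iff.mpr hu0
    have hQ : Qmat ξ η = (innerSL ℝ ((‖(2:ℝ) • ξ - η‖ ^ 2)⁻¹ • ((2:ℝ) • ξ - η))).smulRight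
        ((jap2 ξ)⁻¹ • ξ + (jap2 (ξ - η))⁻¹ • (ξ - η)) := by
      rw [Qmat, if_neg hu0]
    have hQn : ‖Qmat ξ η‖
        = ‖(2:ℝ) • ξ - η‖⁻¹ * ‖(jap2 ξ)⁻¹ • ξ + (jap2 (ξ - η))⁻¹ • (ξ - η)‖ := by
      rw [hQ, ContinuousLinearMap.norm_smulRight_apply, innerSL_apply_norm, norm_smul,
        norm_inv, Real.norm_eq_abs, abs_of_pos (by positivity : (0:ℝ) < ‖(2:ℝ) • ξ - η‖^2)]
      congr 1
      rw [sq]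
      field_simp
    refine ⟨?_, ?_, ?_⟩
    · rw [hQ]
      simp only [ContinuousLinearMap.smulRight_apply, innerSL_apply_apply, real_inner_smul_left,
        real_inner_self_eq_norm_sq]
      rw [inv_mul_cancel₀ (by positivity), one_smul]
    · rw [hQn, div_le_iff₀ (by positivity : (0:ℝ) < japR (‖ξ‖ + ‖η‖)^3),
        inv_mul_eq_div, div_mul_eq_mul_div, le_div_iff₀ hu_pos]
      nlinarith
    · rw [hQn, inv_mul_eq_div, div_le_one hu_pos]
      exact h2
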